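/- Suppose e > 0, l = 1 (so multipartitions are partitions). Then a partition λ belongs to the set RP^Λ of restricted partitions (the connected component of the Fock space crystal generated by the empty partition) if and only if λ_a − λ_{a+1} < e for all a ≥ 1. -/

import Mathlib

open scoped Classical

/-- An `l`-multipartition, encoded as a function assigning to each component
`m < l` and each row index `a` the length of that row. -/
abbrev MP (l : ℕ) := Fin l → ℕ → ℕ

/-- `lam` really is a multipartition: each component is a partition
(non-increasing and eventually zero). -/
def IsMP {l : ℕ} (lam : MP l) : Prop :=
  (∀ m, Antitone (lam m)) ∧ ∃ N, ∀ m a, N ≤ a → lam m a = 0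

/-- The residue (mod `e`) of the node in row `a` (0-indexed) and column `b`
(0-indexed) of component `m`, for the multicharge `k`. -/
def res (e : ℕ) {l : ℕ} (k : Fin l → ℤ) (m : Fin l) (a b : ℕ) : ZMod e :=
  ((k m + b - a : ℤ) : ZMod e)

/-- Row `(m,a)` of `lam` has an addable node (at column `lam m a`). -/
def RowAddable {l : ℕ} (lam : MP l) (m : Fin l) (a : ℕ) : Prop :=
  a = 0 ∨ lam m a < lam m (a - 1)

/-- Row `(m,a)` of `lam` has a removable node (at column `lam m a − 1`). -/
def RowRemovable {l : ℕ} (lam : MP l) (m : Fin l) (a : ℕ) : Prop :=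
  lam m (a + 1) < lam m a

/-- The residue of the addable node of row `(m,a)`. -/
def addRes (e : ℕ) {l : ℕ} (k : Fin l → ℤ) (lam : MP l) (m : Fin l) (a : ℕ) : ZMod e :=
  res e k m a (lam m a)

/-- The residue of the removable node of row `(m,a)`. -/
def remRes (e : ℕ) {l : ℕ} (k : Fin l → ℤ) (lam : MP l) (m : Fin l) (a : ℕ) : ZMod e :=
  res e k m a (lam m a - 1)

/-- The set of rows carrying an addable `i`-node of `lam`. -/
def addableSet (e : ℕ) {l : ℕ} (k : Fin l → ℤ) (lam : MP l) (i : ZMod e) :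
    Set (Fin l × ℕ) :=
  {p | RowAddable lam p.1 p.2 ∧ addRes e k lam p.1 p.2 = i}

/-- The set of rows carrying a removable `i`-node of `lam`. -/
def removableSet (e : ℕ) {l : ℕ} (k : Fin l → ℤ) (lam : MP l) (i : ZMod e) :
    Set (Fin l × ℕ) :=
  {p | RowRemovable lam p.1 p.2 ∧ remRes e k lam p.1 p.2 = i}

/-- The set of nodes `(m, a, b)` of `lam`. -/
def nodes {l : ℕ} (lam : MP l) : Set (Fin l × ℕ × ℕ) :=
  {x | x.2.2 < lam x.1 x.2.1}

/-- The Cartan matrix of type `A_∞` (`e = 0`) or `A_{e−1}^{(1)}` (`e ≥ 2`). -/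
def cartan (e : ℕ) (i j : ZMod e) : ℤ :=
  if i = j then 2
  else -(((if j = i + 1 then 1 else 0) + (if j = i - 1 then 1 else 0) : ℤ))

/-- One step of the reduced `i`-signature computation: the reduced signature has the
form `+^p −^m` (no `−` to the left of a `+`); appending `+` cancels the last `−` if
there is one, appending `−` adds a `−`.  `true` encodes `+` (addable), `false`
encodes `−` (removable). -/
def sigStep (pm : ℕ × ℕ) (s : Bool) : ℕ × ℕ :=
  if s then (if pm.2 = 0 then (pm.1 + 1, pm.2) else (pm.1, pm.2 - 1))
  else (pm.1, pm.2 + 1)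

/-- Processing the `i`-signature top-to-bottom yields `(φ_i, ε_i)`: the numbers of
`+`'s and `−`'s in the reduced `i`-signature. -/
def sigFold (L : List Bool) : ℕ × ℕ := L.foldl sigStep (0, 0)

/-- The signature entry of row `(m,a)` for residue `i`: `some true` for an addable
`i`-node, `some false` for a removable `i`-node, `none` otherwise. -/
noncomputable def rowEntry (e : ℕ) {l : ℕ} (k : Fin l → ℤ) (lam : MP l) (i : ZMod e)
    (m : Fin l) (a : ℕ) : Option Bool :=
  if RowAddable lam m a ∧ addRes e k lam m a = i then some true
  else if RowRemovable lam m a ∧ remRes e k lam m a = i then some false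
  else none

/-- The rows `(m,a)` with `a < N`, listed from top to bottom. -/
def rowList (l N : ℕ) : List (Fin l × ℕ) :=
  (List.finRange l).flatMap fun m => (List.range N).map fun a => (m, a)

/-- The `i`-signature of `lam` (using rows `a < N`), listed top-to-bottom. -/
noncomputable def sigList (e : ℕ) {l : ℕ} (k : Fin l → ℤ) (lam : MP l) (i : ZMod e) (N : ℕ) :
    List Bool :=
  (rowList l N).filterMap fun p => rowEntry e k lam i p.1 p.2

/-- Stack-based scan computing the reduced `i`-signature together with the rows its
entries came from: a `+` cancels a `−` sitting on top of the stack. -/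
def scanStep {l : ℕ} (st : List (Bool × (Fin l × ℕ))) (s : Bool × (Fin l × ℕ)) :
    List (Bool × (Fin l × ℕ)) :=
  if s.1 then
    match st with
    | (false, _) :: rest => rest
    | _ => s :: st
  else s :: st

/-- The `i`-signature of `lam` with row labels. -/
noncomputable def entryList (e : ℕ) {l : ℕ} (k : Fin l → ℤ) (lam : MP l) (i : ZMod e) (N : ℕ) :
    List (Bool × (Fin l × ℕ)) :=
  (rowList l N).filterMap fun p => (rowEntry e k lam i p.1 p.2).map fun b => (b, p)

/-- The row of the good addable `i`-node of `lam`: the rightmost `+` remaining in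
the reduced `i`-signature (the node added by the crystal operator `f̃_i`). -/
noncomputable def goodRow (e : ℕ) {l : ℕ} (k : Fin l → ℤ) (lam : MP l) (i : ZMod e) (N : ℕ) :
    Option (Fin l × ℕ) :=
  (((entryList e k lam i N).foldl scanStep []).find? fun s => s.1).map fun s => s.2

/-- Add a box at the end of row `(m,a)`. -/
noncomputable def addAt {l : ℕ} (lam : MP l) (p : Fin l × ℕ) : MP l :=
  fun m a => if m = p.1 ∧ a = p.2 then lam m a + 1 else lam m a

/-- The crystal operator relation `μ = f̃_i λ` (for some `i`): `μ` is obtained from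
`λ` by adding the good addable `i`-node. -/
def FStep (e l : ℕ) (k : Fin l → ℤ) (lam mu : MP l) : Prop :=
  ∃ (i : ZMod e) (N : ℕ), (∀ m a, N ≤ a → lam m a = 0) ∧
    ∃ p, goodRow e k lam i (N + 1) = some p ∧ mu = addAt lam p

/-- `λ` is a restricted multipartition: it lies in the connected component of the
empty multipartition in the crystal, i.e. it is reachable from `∅` by applying
crystal operators `f̃_i`. -/
def Restricted (e l : ℕ) (k : Fin l → ℤ) (lam : MP l) : Prop :=
  Relation.ReflTransGen (FStep e l k) (fun _ _ => 0) lam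


section ScanLemmas
variable {l : ℕ}

lemma scanStep_push_false (st : List (Bool × (Fin l × ℕ))) (p : Fin l × ℕ) :
    scanStep st (false, p) = (false, p) :: st := rfl

lemma scanStep_pop (st : List (Bool × (Fin l × ℕ))) (q p : Fin l × ℕ) :
    scanStep ((false, q) :: st) (true, p) = st := rfl

lemma scanStep_nil (p : Fin l × ℕ) :
    scanStep ([] : List (Bool × (Fin l × ℕ))) (true, p) = [(true, p)] := rfl

lemma scanStep_push_true (st : List (Bool × (Fin l × ℕ))) (q p : Fin l × ℕ) :
    scanStep ((true, q) :: st) (true, p) = (true, p) :: (true, q) :: st := rfl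

lemma mem_scanStep {st : List (Bool × (Fin l × ℕ))} {s x : Bool × (Fin l × ℕ)}
    (hx : x ∈ scanStep st s) : x = s ∨ x ∈ st := by
  obtain ⟨b, p⟩ := s
  cases b with
  | false =>
    rw [scanStep_push_false] at hx
    rcases List.mem_cons.mp hx with h | h
    · exact Or.inl h
    · exact Or.inr h
  | true =>
    match st with
    | [] => rw [scanStep_nil] at hx; simp at hx; exact Or.inl hx
    | (false, q) :: rest => rw [scanStep_pop] at hx; exact Or.inr (List.mem_cons_of_mem _ hx)
    | (true, q) :: rest =>
      rw [scanStep_push_true] at hx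
      rcases List.mem_cons.mp hx with h | h
      · exact Or.inl h
      · exact Or.inr h

lemma mem_foldl_scan : ∀ (L : List (Bool × (Fin l × ℕ))) (st : List (Bool × (Fin l × ℕ)))
    (x : Bool × (Fin l × ℕ)), x ∈ List.foldl scanStep st L → x ∈ st ∨ x ∈ L := by
  intro L
  induction L with
  | nil => intro st x hx; exact Or.inl hx
  | cons s L ih =>
    intro st x hx
    rcases ih (scanStep st s) x hx with h | h
    · rcases mem_scanStep h with h' | h'
      · exact Or.inr (h' ▸ List.mem_cons_self)
      · exact Or.inl h'
    · exact Or.inr (List.mem_cons_of_mem _ h)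

lemma scanStep_sublist (st : List (Bool × (Fin l × ℕ))) (s : Bool × (Fin l × ℕ)) :
    (scanStep st s).Sublist (s :: st) := by
  obtain ⟨b, p⟩ := s
  cases b with
  | false => rw [scanStep_push_false]
  | true =>
    match st with
    | [] => rw [scanStep_nil]
    | (false, q) :: rest =>
      rw [scanStep_pop]
      exact List.Sublist.trans (List.sublist_cons_self _ _) (List.sublist_cons_self _ _)
    | (true, q) :: rest => rw [scanStep_push_true]

lemma foldl_scan_sublist : ∀ (L st : List (Bool × (Fin l × ℕ))),
    (List.foldl scanStep st L).Sublist (L.reverse ++ st) := by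
  intro L
  induction L with
  | nil => intro st; simp
  | cons s L ih =>
    intro st
    have h1 := ih (scanStep st s)
    have h2 : (L.reverse ++ scanStep st s).Sublist (L.reverse ++ s :: st) :=
      List.Sublist.append_left (scanStep_sublist st s) _
    have h3 : (s :: L).reverse ++ st = L.reverse ++ s :: st := by simp
    rw [List.foldl_cons, h3]
    exact h1.trans h2

/-- the stack always has the shape `falses ++ trues` -/
lemma foldl_scan_FT : ∀ (L st : List (Bool × (Fin l × ℕ)))
    (F T : List (Bool × (Fin l × ℕ))), st = F ++ T → (∀ w ∈ F, w.1 = false) →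
    (∀ w ∈ T, w.1 = true) →
    ∃ F' T', List.foldl scanStep st L = F' ++ T' ∧ (∀ w ∈ F', w.1 = false) ∧
      (∀ w ∈ T', w.1 = true) := by
  intro L
  induction L with
  | nil => intro st F T h hF hT; exact ⟨F, T, h ▸ rfl, hF, hT⟩
  | cons s L ih =>
    intro st F T h hF hT
    obtain ⟨b, p⟩ := s
    rw [List.foldl_cons]
    cases b with
    | false =>
      refine ih _ ((false, p) :: F) T ?_ ?_ hT
      · rw [h, scanStep_push_false]; rfl
      · intro w hw
        rcases List.mem_cons.mp hw with h' | h'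
        · rw [h']
        · exact hF w h'
    | true =>
      match F, hF with
      | [], hF =>
        match T, hT with
        | [], hT =>
          subst h
          refine ih _ [] [(true, p)] (by simp only [List.append_nil, List.nil_append]; rw [scanStep_nil]) (by simp) ?_
          intro w hw; simp at hw; rw [hw]
        | t :: T', hT =>
          have ht : t = (true, t.2) := by
            have := hT t (List.mem_cons_self)
            exact Prod.ext this rfl
          subst h
          simp only [List.nil_append]
          rw [ht, scanStep_push_true]
          refine ih _ [] ((true, p) :: (true, t.2) :: T') rfl (by simp) ?_
          intro w hw
          rcases List.mem_cons.mp hw with h' | h'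
          · rw [h']
          · rw [← ht] at h'; exact hT w h'
      | f :: F', hF =>
        have hf : f = (false, f.2) := by
          have := hF f (List.mem_cons_self)
          exact Prod.ext this rfl
        subst h
        rw [List.cons_append, hf, scanStep_pop]
        exact ih _ F' T rfl (fun w hw => hF w (List.mem_cons_of_mem _ hw)) hT

lemma append_cons_inj {α : Type*} {x : α} : ∀ {A : List α} {C : List α} {B D : List α},
    A ++ x :: B = C ++ x :: D → x ∉ A → x ∉ C → A = C ∧ B = D := by
  intro A
  induction A with
  | nil =>
    intro C B D h hA hC
    match C with
    | [] => simp at h; exact ⟨rfl, h⟩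
    | c :: C' =>
      exfalso
      simp only [List.nil_append, List.cons_append, List.cons.injEq] at h
      exact hC (h.1 ▸ List.mem_cons_self)
  | cons a A' ih =>
    intro C B D h hA hC
    match C with
    | [] =>
      exfalso
      simp only [List.nil_append, List.cons_append, List.cons.injEq] at h
      exact hA (h.1 ▸ List.mem_cons_self)
    | c :: C' =>
      simp only [List.cons_append, List.cons.injEq] at h
      have := ih h.2 (fun hx => hA (List.mem_cons_of_mem _ hx))
        (fun hx => hC (List.mem_cons_of_mem _ hx))
      exact ⟨by rw [h.1, this.1], this.2⟩

/-- a `false` entry that survives to the end: the part of the stack below it is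
untouched, and the scan runs identically if we replace it by anything else. -/
lemma survive_false : ∀ (Q : List (Bool × (Fin l × ℕ)))
    (Z st : List (Bool × (Fin l × ℕ))) (p : Fin l × ℕ),
    (false, p) ∉ Q → (false, p) ∉ st → (false, p) ∉ Z →
    (false, p) ∈ List.foldl scanStep (Z ++ (false, p) :: st) Q →
    ∀ y : Bool × (Fin l × ℕ), ∃ X, (∀ w ∈ X, w ∈ Z ∨ w ∈ Q) ∧
      List.foldl scanStep (Z ++ (false, p) :: st) Q = X ++ (false, p) :: st ∧
      List.foldl scanStep (Z ++ y :: st) Q = X ++ y :: st := by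
  intro Q
  induction Q with
  | nil =>
    intro Z st p _ _ hZ _ y
    exact ⟨Z, fun w hw => Or.inl hw, rfl, rfl⟩
  | cons s Q' ih =>
    intro Z st p hQ hst hZ hmem y
    have hps : (false, p) ≠ s := fun h => hQ (h ▸ List.mem_cons_self)
    have hQ' : (false, p) ∉ Q' := fun h => hQ (List.mem_cons_of_mem _ h)
    obtain ⟨sb, sp⟩ := s
    cases sb with
    | false =>
      simp only [List.foldl_cons] at hmem ⊢
      rw [show scanStep (Z ++ (false, p) :: st) (false, sp)
            = ((false, sp) :: Z) ++ (false, p) :: st from rfl] at hmem ⊢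
      rw [show scanStep (Z ++ y :: st) (false, sp) = ((false, sp) :: Z) ++ y :: st from rfl]
      have hZ' : (false, p) ∉ (false, sp) :: Z := by
        intro h; rcases List.mem_cons.mp h with h' | h'
        · exact hps h'
        · exact hZ h'
      obtain ⟨X, hX, h1, h2⟩ := ih _ st p hQ' hst hZ' hmem y
      refine ⟨X, ?_, h1, h2⟩
      intro w hw
      rcases hX w hw with h' | h'
      · rcases List.mem_cons.mp h' with h'' | h''
        · exact Or.inr (h'' ▸ List.mem_cons_self)
        · exact Or.inl h''
      · exact Or.inr (List.mem_cons_of_mem _ h')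
    | true =>
      match Z, hZ with
      | [], _ =>
        exfalso
        simp only [List.nil_append, List.foldl_cons, scanStep_pop] at hmem
        rcases mem_foldl_scan _ _ _ hmem with h | h
        · exact hst h
        · exact hQ' h
      | z :: Z', hZ =>
        have hzZ : (false, p) ≠ z := fun h => hZ (h ▸ List.mem_cons_self)
        have hZ'' : (false, p) ∉ Z' := fun h => hZ (List.mem_cons_of_mem _ h)
        obtain ⟨zb, zq⟩ := z
        cases zb with
        | false =>
          simp only [List.foldl_cons, List.cons_append, scanStep_pop] at hmem ⊢
          obtain ⟨X, hX, h1, h2⟩ := ih _ st p hQ' hst hZ'' hmem y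
          exact ⟨X, fun w hw => (hX w hw).imp (List.mem_cons_of_mem _)
            (List.mem_cons_of_mem _), h1, h2⟩
        | true =>
          simp only [List.foldl_cons, List.cons_append, scanStep_push_true] at hmem ⊢
          rw [show (true, sp) :: (true, zq) :: (Z' ++ (false, p) :: st)
              = ((true, sp) :: (true, zq) :: Z') ++ (false, p) :: st from rfl] at hmem ⊢
          rw [show (true, sp) :: (true, zq) :: (Z' ++ y :: st)
              = ((true, sp) :: (true, zq) :: Z') ++ y :: st from rfl]
          have hZ3 : (false, p) ∉ (true, sp) :: (true, zq) :: Z' := by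
            intro h
            rcases List.mem_cons.mp h with h' | h'
            · exact hps h'
            · rcases List.mem_cons.mp h' with h'' | h''
              · exact hzZ h''
              · exact hZ'' h''
          obtain ⟨X, hX, h1, h2⟩ := ih _ st p hQ' hst hZ3 hmem y
          refine ⟨X, ?_, h1, h2⟩
          intro w hw
          rcases hX w hw with h' | h'
          · rcases List.mem_cons.mp h' with h'' | h''
            · exact Or.inr (h'' ▸ List.mem_cons_self)
            · rcases List.mem_cons.mp h'' with h3 | h3
              · exact Or.inl (h3 ▸ List.mem_cons_self)
              · exact Or.inl (List.mem_cons_of_mem _ h3)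
          · exact Or.inr (List.mem_cons_of_mem _ h')

/-- a `true` entry on the stack is never popped. -/
lemma survive_true : ∀ (Q : List (Bool × (Fin l × ℕ)))
    (Z st : List (Bool × (Fin l × ℕ))) (p : Fin l × ℕ),
    ∃ X, (∀ w ∈ X, w ∈ Z ∨ w ∈ Q) ∧
      List.foldl scanStep (Z ++ (true, p) :: st) Q = X ++ (true, p) :: st := by
  intro Q
  induction Q with
  | nil => intro Z st p; exact ⟨Z, fun w hw => Or.inl hw, rfl⟩
  | cons s Q' ih =>
    intro Z st p
    obtain ⟨sb, sp⟩ := s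
    cases sb with
    | false =>
      simp only [List.foldl_cons]
      rw [show scanStep (Z ++ (true, p) :: st) (false, sp)
            = ((false, sp) :: Z) ++ (true, p) :: st from rfl]
      obtain ⟨X, hX, h1⟩ := ih ((false, sp) :: Z) st p
      refine ⟨X, ?_, h1⟩
      intro w hw
      rcases hX w hw with h' | h'
      · rcases List.mem_cons.mp h' with h'' | h''
        · exact Or.inr (h'' ▸ List.mem_cons_self)
        · exact Or.inl h''
      · exact Or.inr (List.mem_cons_of_mem _ h')
    | true =>
      match Z with
      | [] =>
        simp only [List.nil_append, List.foldl_cons, scanStep_push_true]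
        rw [show (true, sp) :: (true, p) :: st = [(true, sp)] ++ (true, p) :: st from rfl]
        obtain ⟨X, hX, h1⟩ := ih [(true, sp)] st p
        refine ⟨X, ?_, h1⟩
        intro w hw
        rcases hX w hw with h' | h'
        · simp at h'; exact Or.inr (h' ▸ List.mem_cons_self)
        · exact Or.inr (List.mem_cons_of_mem _ h')
      | z :: Z' =>
        obtain ⟨zb, zq⟩ := z
        cases zb with
        | false =>
          simp only [List.foldl_cons, List.cons_append, scanStep_pop]
          obtain ⟨X, hX, h1⟩ := ih Z' st p
          exact ⟨X, fun w hw => (hX w hw).imp (List.mem_cons_of_mem _)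
            (List.mem_cons_of_mem _), h1⟩
        | true =>
          simp only [List.foldl_cons, List.cons_append, scanStep_push_true]
          rw [show (true, sp) :: (true, zq) :: (Z' ++ (true, p) :: st)
              = ((true, sp) :: (true, zq) :: Z') ++ (true, p) :: st from rfl]
          obtain ⟨X, hX, h1⟩ := ih ((true, sp) :: (true, zq) :: Z') st p
          refine ⟨X, ?_, h1⟩
          intro w hw
          rcases hX w hw with h' | h'
          · rcases List.mem_cons.mp h' with h'' | h''
            · exact Or.inr (h'' ▸ List.mem_cons_self)
            · rcases List.mem_cons.mp h'' with h3 | h3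
              · exact Or.inl (h3 ▸ List.mem_cons_self)
              · exact Or.inl (List.mem_cons_of_mem _ h3)
          · exact Or.inr (List.mem_cons_of_mem _ h')

end ScanLemmas


section Level1
variable (e : ℕ) (k : Fin 1 → ℤ)

/-- labelled row entry for level 1 -/
noncomputable def ent (lam : MP 1) (i : ZMod e) (a : ℕ) : Option (Bool × (Fin 1 × ℕ)) :=
  (rowEntry e k lam i 0 a).map fun b => (b, ((0 : Fin 1), a))

lemma ent_eq_some {lam : MP 1} {i : ZMod e} {a : ℕ} {x : Bool × (Fin 1 × ℕ)}
    (h : ent e k lam i a = some x) :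
    rowEntry e k lam i 0 a = some x.1 ∧ x.2 = ((0 : Fin 1), a) := by
  unfold ent at h
  cases hr : rowEntry e k lam i 0 a with
  | none => rw [hr] at h; simp at h
  | some b =>
    rw [hr] at h
    simp only [Option.map_some, Option.some.injEq] at h
    subst h
    exact ⟨rfl, rfl⟩

lemma ent_of_rowEntry {lam : MP 1} {i : ZMod e} {a : ℕ} {b : Bool}
    (h : rowEntry e k lam i 0 a = some b) :
    ent e k lam i a = some (b, ((0 : Fin 1), a)) := by
  unfold ent; rw [h]; rfl

lemma entryList_eq (lam : MP 1) (i : ZMod e) (M : ℕ) :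
    entryList e k lam i M = (List.range M).filterMap (ent e k lam i) := by
  unfold entryList rowList
  have h1 : List.finRange 1 = [(0 : Fin 1)] := by
    simp [List.finRange_succ]
  rw [h1]
  simp only [List.flatMap_cons, List.flatMap_nil, List.append_nil, List.filterMap_map]
  rfl

lemma entryList_nodup (lam : MP 1) (i : ZMod e) (M : ℕ) :
    (entryList e k lam i M).Nodup := by
  rw [entryList_eq]
  refine List.Nodup.filterMap ?_ (List.nodup_range)
  intro a a' x hx hx'
  have h1 := (ent_eq_some e k (Option.mem_def.mp hx)).2
  have h2 := (ent_eq_some e k (Option.mem_def.mp hx')).2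
  have : a = a' := by rw [h1] at h2; exact (Prod.ext_iff.mp h2).2
  exact this

lemma rowEntry_eq_true_iff {lam : MP 1} {i : ZMod e} {a : ℕ} :
    rowEntry e k lam i 0 a = some true ↔ RowAddable lam 0 a ∧ addRes e k lam 0 a = i := by
  unfold rowEntry
  split
  · simp_all
  · split <;> simp_all

lemma rowEntry_eq_false_iff {lam : MP 1} {i : ZMod e} {a : ℕ} :
    rowEntry e k lam i 0 a = some false ↔
      ¬(RowAddable lam 0 a ∧ addRes e k lam 0 a = i) ∧
        (RowRemovable lam 0 a ∧ remRes e k lam 0 a = i) := by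
  unfold rowEntry
  split
  · simp_all
  · split <;> simp_all

lemma range_split {a N : ℕ} (h : a ≤ N) :
    List.range (N + 1) = List.range a ++ a :: (List.range (N - a)).map (fun j => a + 1 + j) := by
  have h1 : N + 1 = a + 1 + (N - a) := by omega
  rw [h1, List.range_add, List.range_succ]
  simp

lemma range_split2 {a N : ℕ} (h : a + 1 ≤ N) :
    List.range (N + 1) = List.range a ++ a :: (a + 1) ::
      (List.range (N - a - 1)).map (fun j => a + 2 + j) := by
  have h1 := range_split (a := a + 1) (N := N) h
  rw [h1, List.range_succ]
  have : ∀ j, a + 1 + 1 + j = a + 2 + j := fun j => by omega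
  simp [this]
  rw [Nat.sub_sub]

lemma mem_range_filterMap_ent {lam : MP 1} {i : ZMod e} {c : ℕ} {x : Bool × (Fin 1 × ℕ)}
    (hx : x ∈ (List.range c).filterMap (ent e k lam i)) : x.2.2 < c := by
  obtain ⟨b, hb, hbe⟩ := List.mem_filterMap.mp hx
  rw [(ent_eq_some e k hbe).2]
  exact List.mem_range.mp hb

lemma mem_shift_filterMap_ent {lam : MP 1} {i : ZMod e} {c d : ℕ} {x : Bool × (Fin 1 × ℕ)}
    (hx : x ∈ (List.range c).filterMap (fun j => ent e k lam i (d + j))) : d ≤ x.2.2 := by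
  obtain ⟨b, hb, hbe⟩ := List.mem_filterMap.mp hx
  rw [(ent_eq_some e k hbe).2]
  exact Nat.le_add_right _ _

lemma mem_entryList_rowEntry {lam : MP 1} {i : ZMod e} {M : ℕ} {x : Bool × (Fin 1 × ℕ)}
    (hx : x ∈ entryList e k lam i M) :
    rowEntry e k lam i 0 x.2.2 = some x.1 ∧ x.2 = ((0 : Fin 1), x.2.2) ∧ x.2.2 < M := by
  rw [entryList_eq] at hx
  obtain ⟨b, hb, hbe⟩ := List.mem_filterMap.mp hx
  obtain ⟨h1, h2⟩ := ent_eq_some e k hbe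
  have hb2 : x.2.2 = b := by rw [h2]
  subst hb2
  exact ⟨h1, h2, List.mem_range.mp hb⟩

lemma mem_final_entryList {lam : MP 1} {i : ZMod e} {M : ℕ} {x : Bool × (Fin 1 × ℕ)}
    (hx : x ∈ (entryList e k lam i M).foldl scanStep []) : x ∈ entryList e k lam i M := by
  have hsub := foldl_scan_sublist (entryList e k lam i M) []
  have := hsub.subset hx
  rw [List.append_nil] at this
  exact List.mem_reverse.mp this

lemma intCast_sub_e (A : ℤ) : ((A - e : ℤ) : ZMod e) = (A : ZMod e) := by
  push_cast [ZMod.natCast_self]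
  ring

/-- Key step for the forward direction: applying a crystal operator preserves
`e`-restrictedness. -/
lemma fstep_preserves (he : 2 ≤ e) {mu lamb : MP 1}
    (hres : ∀ b : ℕ, mu 0 b - mu 0 (b + 1) < e) (h : FStep e 1 k mu lamb) :
    ∀ b : ℕ, lamb 0 b - lamb 0 (b + 1) < e := by
  obtain ⟨i, N, hN, p, hgood, rfl⟩ := h
  obtain ⟨pm, a⟩ := p
  have hpm : pm = 0 := Subsingleton.elim _ _
  subst hpm
  -- extract the find? equation
  unfold goodRow at hgood
  obtain ⟨s, hfind, hs2⟩ := Option.map_eq_some_iff.mp hgood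
  have hs1 : s.1 = true := by
    have := List.find?_some hfind
    simpa using this
  have hs : s = (true, ((0 : Fin 1), a)) := by
    obtain ⟨b1, b2⟩ := s
    simp only at hs1 hs2
    rw [hs1, hs2]
  subst hs
  -- row a facts
  have hmem : (true, ((0 : Fin 1), a)) ∈ entryList e k mu i (N + 1) :=
    mem_final_entryList e k (List.mem_of_find?_eq_some hfind)
  obtain ⟨hrowE, -, haN'⟩ := mem_entryList_rowEntry e k hmem
  simp only at hrowE haN'
  obtain ⟨hadd, haddres⟩ := (rowEntry_eq_true_iff e k).mp hrowE
  -- values of addAt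
  have hval : ∀ m b, addAt mu ((0 : Fin 1), a) m b = if b = a then mu 0 b + 1 else mu 0 b := by
    intro m b
    have hm : m = 0 := Subsingleton.elim _ _
    subst hm
    unfold addAt
    by_cases hb : b = a <;> simp [hb]
  -- the crucial claim
  have hkey : mu 0 a + 1 - mu 0 (a + 1) < e := by
    by_contra hcon
    push_neg at hcon
    have h1 := hres a
    have hlt : mu 0 (a + 1) < mu 0 a := by omega
    have heq : (mu 0 a : ℤ) + 1 = mu 0 (a + 1) + e := by omega
    have haN : a < N := by
      by_contra hc
      push_neg at hc
      have := hN 0 a hc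
      omega
    -- row a+1 is also addable with residue i
    have hadd1 : RowAddable mu 0 (a + 1) := by
      right
      simpa using hlt
    have hres1 : addRes e k mu 0 (a + 1) = i := by
      unfold addRes res at haddres ⊢
      have harg : (k 0 + mu 0 (a + 1) - (↑(a + 1)) : ℤ) = (k 0 + mu 0 a - a) - e := by
        push_cast
        omega
      rw [harg, intCast_sub_e, haddres]
    have hentA : ent e k mu i a = some (true, ((0 : Fin 1), a)) :=
      ent_of_rowEntry e k hrowE
    have hentA1 : ent e k mu i (a + 1) = some (true, ((0 : Fin 1), a + 1)) :=
      ent_of_rowEntry e k ((rowEntry_eq_true_iff e k).mpr ⟨hadd1, hres1⟩)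
    -- split the entry list
    have hsplit : entryList e k mu i (N + 1)
        = (List.range a).filterMap (ent e k mu i)
          ++ (true, ((0 : Fin 1), a)) :: (true, ((0 : Fin 1), a + 1))
          :: (List.range (N - a - 1)).filterMap (fun j => ent e k mu i (a + 2 + j)) := by
      rw [entryList_eq, range_split2 (by omega : a + 1 ≤ N)]
      rw [List.filterMap_append, List.filterMap_cons, List.filterMap_cons, hentA, hentA1,
        List.filterMap_map]
      rfl
    set P := (List.range a).filterMap (ent e k mu i) with hP
    set Q := (List.range (N - a - 1)).filterMap (fun j => ent e k mu i (a + 2 + j)) with hQ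
    set S0 := List.foldl scanStep [] P with hS0
    have hfold : (entryList e k mu i (N + 1)).foldl scanStep []
        = List.foldl scanStep (scanStep (scanStep S0 (true, ((0 : Fin 1), a)))
            (true, ((0 : Fin 1), a + 1))) Q := by
      rw [hsplit]
      rw [List.foldl_append]
      rfl
    have hS0mem : ∀ x ∈ S0, x.2.2 < a := by
      intro x hx
      rcases mem_foldl_scan _ _ _ hx with h' | h'
      · simp at h'
      · exact mem_range_filterMap_ent e k h'
    have hQmem : ∀ x ∈ Q, a + 2 ≤ x.2.2 := fun x hx => mem_shift_filterMap_ent e k hx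
    -- step at row a must be a push
    have hpush : scanStep S0 (true, ((0 : Fin 1), a)) = (true, ((0 : Fin 1), a)) :: S0 := by
      match hS : S0 with
      | [] => rw [scanStep_nil]
      | (true, q) :: rest => rw [scanStep_push_true]
      | (false, q) :: rest =>
        exfalso
        rw [scanStep_pop] at hfold
        have hmem2 : (true, ((0 : Fin 1), a)) ∈ List.foldl scanStep
            (scanStep rest (true, ((0 : Fin 1), a + 1))) Q := by
          rw [← hfold]; exact List.mem_of_find?_eq_some hfind
        rcases mem_foldl_scan _ _ _ hmem2 with h' | h'
        · rcases mem_scanStep h' with h'' | h''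
          · simp at h''
          · exact absurd (hS0mem _ (List.mem_cons_of_mem _ h'')) (by simp)
        · have h2 := hQmem _ h'
          simp at h2
    rw [hpush, scanStep_push_true] at hfold
    -- row a+1's + survives above row a's +
    obtain ⟨X, hX, hXeq⟩ := survive_true Q [] ((true, ((0 : Fin 1), a)) :: S0) ((0 : Fin 1), a + 1)
    rw [List.nil_append] at hXeq
    rw [hXeq] at hfold
    rw [hfold, List.find?_append] at hfind
    cases hfX : X.find? (fun s => s.1) with
    | some w =>
      rw [hfX] at hfind
      simp only [Option.some_or] at hfind
      have hw : w = (true, ((0 : Fin 1), a)) := by injection hfind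
      have hwX := List.mem_of_find?_eq_some hfX
      rcases hX w hwX with h' | h'
      · simp at h'
      · rw [hw] at h'
        have h2 := hQmem _ h'
        simp at h2
    | none =>
      rw [hfX] at hfind
      simp only [Option.none_or] at hfind
      rw [List.find?_cons_of_pos rfl] at hfind
      have : ((0 : Fin 1), a + 1) = ((0 : Fin 1), a) := by
        injection hfind with h'
        exact (Prod.ext_iff.mp h').2
      simp at this
  -- finish with case analysis
  intro b
  have h1 := hres b
  rw [hval, hval]
  split_ifs with hb hb1 hb1
  · omega
  · subst hb
    exact hkey
  · omega
  · exact h1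

end Level1


section Backward
variable (e : ℕ) (k : Fin 1 → ℤ)

lemma zmod_intCast_ne (he : 2 ≤ e) {A B : ℤ} (h1 : A ≠ B) (h2 : A - B < e) (h3 : B - A < e) :
    ((A : ℤ) : ZMod e) ≠ ((B : ℤ) : ZMod e) := by
  intro h
  rw [ZMod.intCast_eq_intCast_iff] at h
  have hdvd := Int.ModEq.dvd h
  have hne : B - A ≠ 0 := by omega
  have hle : (e : ℤ) ≤ |B - A| := Int.le_of_dvd (abs_pos.mpr hne) ((dvd_abs _ _).mpr hdvd)
  rcases abs_cases (B - A) with ⟨h4, h5⟩ | ⟨h4, h5⟩ <;> omega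

lemma intCast_add_e (A : ℤ) : ((A + e : ℤ) : ZMod e) = (A : ZMod e) := by
  push_cast [ZMod.natCast_self]
  ring

lemma rowEntry_eq_none_iff {lam : MP 1} {i : ZMod e} {a : ℕ} :
    rowEntry e k lam i 0 a = none ↔
      ¬(RowAddable lam 0 a ∧ addRes e k lam 0 a = i) ∧
        ¬(RowRemovable lam 0 a ∧ remRes e k lam 0 a = i) := by
  unfold rowEntry
  split
  · simp_all
  · split <;> simp_all

lemma rowEntry_congr (lam1 lam2 : MP 1) (i : ZMod e) (b : ℕ)
    (hA : (RowAddable lam1 0 b ∧ addRes e k lam1 0 b = i) ↔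
      (RowAddable lam2 0 b ∧ addRes e k lam2 0 b = i))
    (hR : (RowRemovable lam1 0 b ∧ remRes e k lam1 0 b = i) ↔
      (RowRemovable lam2 0 b ∧ remRes e k lam2 0 b = i)) :
    rowEntry e k lam1 i 0 b = rowEntry e k lam2 i 0 b := by
  unfold rowEntry
  by_cases h1 : RowAddable lam1 0 b ∧ addRes e k lam1 0 b = i
  · rw [if_pos h1, if_pos (hA.mp h1)]
  · rw [if_neg h1, if_neg (fun h => h1 (hA.mpr h))]
    by_cases h2 : RowRemovable lam1 0 b ∧ remRes e k lam1 0 b = i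
    · rw [if_pos h2, if_pos (hR.mp h2)]
    · rw [if_neg h2, if_neg (fun h => h2 (hR.mpr h))]

/-- remove a box from row `a`. -/
noncomputable def decAt (lam : MP 1) (a : ℕ) : MP 1 :=
  fun _ c => if c = a then lam 0 c - 1 else lam 0 c

variable {lam : MP 1} {i : ZMod e} {a : ℕ}

lemma decAt_ne (c : ℕ) (hc : c ≠ a) : decAt lam a 0 c = lam 0 c := by
  simp [decAt, hc]

lemma decAt_at : decAt lam a 0 a = lam 0 a - 1 := by simp [decAt]

lemma hi_int (hrem : lam 0 (a + 1) < lam 0 a) (hi : remRes e k lam 0 a = i) :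
    ((k 0 + (lam 0 a : ℤ) - 1 - a : ℤ) : ZMod e) = i := by
  rw [← hi]
  unfold remRes res
  congr 1
  have : ((lam 0 a - 1 : ℕ) : ℤ) = (lam 0 a : ℤ) - 1 := by
    have : 1 ≤ lam 0 a := by omega
    push_cast [this]
    ring
  rw [this]
  ring

lemma decAt_rowEntry_at (hanti : Antitone (lam 0)) (hrem : lam 0 (a + 1) < lam 0 a)
    (hi : remRes e k lam 0 a = i) :
    rowEntry e k (decAt lam a) i 0 a = some true := by
  have hpos : 1 ≤ lam 0 a := by omega
  have hA : RowAddable (decAt lam a) 0 a := by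
    rcases Nat.eq_zero_or_pos a with ha | ha
    · exact Or.inl ha
    · right
      rw [decAt_at, decAt_ne (a - 1) (by omega)]
      have := hanti (show a - 1 ≤ a by omega)
      omega
  have hAr : addRes e k (decAt lam a) 0 a = i := by
    unfold addRes res
    rw [decAt_at]
    rw [← hi]
    rfl
  unfold rowEntry
  rw [if_pos ⟨hA, hAr⟩]

lemma decAt_rowEntry_ne (he : 2 ≤ e) (hanti : Antitone (lam 0)) (hrem : lam 0 (a + 1) < lam 0 a)
    (hi : remRes e k lam 0 a = i) (b : ℕ) (hb : b ≠ a) :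
    rowEntry e k (decAt lam a) i 0 b = rowEntry e k lam i 0 b := by
  have hpos : 1 ≤ lam 0 a := by omega
  have hii := hi_int e k hrem hi
  by_cases hb1 : b = a + 1
  · subst hb1
    apply rowEntry_congr
    · -- addable part at row a+1
      have hres_eq : addRes e k (decAt lam a) 0 (a + 1) = addRes e k lam 0 (a + 1) := by
        unfold addRes res
        rw [decAt_ne (a + 1) (by omega)]
      constructor
      · rintro ⟨hA, hAr⟩
        have hlt : decAt lam a 0 (a + 1) < decAt lam a 0 (a + 1 - 1) := by
          rcases hA with h | h
          · omega
          · exact h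
        rw [decAt_ne (a + 1) (by omega), show a + 1 - 1 = a from rfl, decAt_at] at hlt
        exact ⟨Or.inr (by simpa using (by omega : lam 0 (a + 1) < lam 0 a)),
          by rw [← hres_eq]; exact hAr⟩
      · rintro ⟨hA, hAr⟩
        by_cases hc : lam 0 (a + 1) = lam 0 a - 1
        · exfalso
          have : addRes e k lam 0 (a + 1)
              = ((k 0 + (lam 0 a : ℤ) - 1 - a - 1 : ℤ) : ZMod e) := by
            unfold addRes res
            congr 1
            rw [hc]
            push_cast [hpos]
            ring
          rw [this] at hAr
          rw [← hii] at hAr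
          refine zmod_intCast_ne e he ?_ ?_ ?_ hAr <;> omega
        · refine ⟨Or.inr ?_, by rw [hres_eq]; exact hAr⟩
          rw [decAt_ne (a + 1) (by omega), show a + 1 - 1 = a from rfl, decAt_at]
          omega
    · -- removable part at row a+1 : untouched
      unfold RowRemovable remRes res
      rw [decAt_ne (a + 1) (by omega), decAt_ne (a + 2) (by omega)]
  · by_cases hb2 : b + 1 = a
    · -- b = a - 1
      apply rowEntry_congr
      · unfold RowAddable addRes res
        rw [decAt_ne b hb, decAt_ne (b - 1) (by omega)]
      · have hrres : remRes e k (decAt lam a) 0 b = remRes e k lam 0 b := by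
          unfold remRes res
          rw [decAt_ne b hb]
        constructor
        · rintro ⟨hR, hRr⟩
          unfold RowRemovable at hR
          rw [decAt_ne b hb, hb2, decAt_at] at hR
          by_cases hc : lam 0 b = lam 0 a
          · exfalso
            have : remRes e k lam 0 b = ((k 0 + (lam 0 a : ℤ) - 1 - a + 1 : ℤ) : ZMod e) := by
              unfold remRes res
              congr 1
              rw [hc]
              push_cast [hpos]
              omega
            rw [hrres, this] at hRr
            rw [← hii] at hRr
            refine zmod_intCast_ne e he ?_ ?_ ?_ hRr <;> omega
          · have hge : lam 0 a ≤ lam 0 b := hanti (by omega)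
            refine ⟨?_, by rw [← hrres]; exact hRr⟩
            unfold RowRemovable
            rw [hb2]
            omega
        · rintro ⟨hR, hRr⟩
          unfold RowRemovable at hR ⊢
          rw [hb2] at hR
          rw [decAt_ne b hb, hb2, decAt_at]
          exact ⟨by omega, by rw [hrres]; exact hRr⟩
    · -- far case
      apply rowEntry_congr <;>
        [ (unfold RowAddable addRes res;
           rw [decAt_ne b hb, decAt_ne (b - 1) (by omega)]);
          (unfold RowRemovable remRes res;
           rw [decAt_ne b hb, decAt_ne (b + 1) (by omega)]) ]

end Backward


section BackwardMain
variable (e : ℕ) (k : Fin 1 → ℤ)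

lemma restricted_of_zero {lam : MP 1} (h : ∀ b, lam 0 b = 0) : Restricted e 1 k lam := by
  have : lam = (fun _ _ => 0 : MP 1) := by
    funext m b
    have hm : m = 0 := Subsingleton.elim _ _
    subst hm
    exact h b
  unfold Restricted
  rw [this]

lemma restricted_of_eRestricted (he : 2 ≤ e) :
    ∀ (n : ℕ) (lam : MP 1), Antitone (lam 0) → (∀ b, lam 0 b - lam 0 (b + 1) < e) →
      ∀ N : ℕ, (∀ b, N ≤ b → lam 0 b = 0) → (Finset.range N).sum (lam 0) ≤ n →
      Restricted e 1 k lam := by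
  intro n
  induction n with
  | zero =>
    intro lam hanti hres N hN hsum
    apply restricted_of_zero
    intro b
    by_cases hbN : b < N
    · have h0 : (Finset.range N).sum (lam 0) = 0 := by omega
      exact Finset.sum_eq_zero_iff.mp h0 b (Finset.mem_range.mpr hbN)
    · exact hN b (by omega)
  | succ n ih =>
    intro lam hanti hres N hN hsum
    by_cases hz : ∀ b, lam 0 b = 0
    · exact restricted_of_zero e k hz
    push_neg at hz
    obtain ⟨b0, hb0⟩ := hz
    have hb0N : b0 < N := by
      by_contra hcb
      push_neg at hcb
      exact hb0 (hN b0 hcb)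
    -- the last nonzero row
    obtain ⟨a0, ha0pos, ha0gt⟩ : ∃ a0, lam 0 a0 ≠ 0 ∧ ∀ c, a0 < c → lam 0 c = 0 := by
      refine ⟨Nat.findGreatest (fun c => lam 0 c ≠ 0) N, ?_, ?_⟩
      · exact Nat.findGreatest_spec (P := fun c => lam 0 c ≠ 0) (le_of_lt hb0N) hb0
      · intro c hc
        by_cases hcN : c ≤ N
        · by_contra hcc
          exact (Nat.findGreatest_is_greatest (P := fun c => lam 0 c ≠ 0) hc hcN) hcc
        · exact hN c (by omega)
    have ha0N : a0 < N := by
      by_contra hcb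
      push_neg at hcb
      exact ha0pos (hN a0 hcb)
    obtain ⟨i, hidef⟩ : ∃ i : ZMod e, i = remRes e k lam 0 a0 := ⟨_, rfl⟩
    have hrem0 : lam 0 (a0 + 1) < lam 0 a0 := by
      have := ha0gt (a0 + 1) (by omega)
      omega
    have hii0 : ((k 0 + (lam 0 a0 : ℤ) - 1 - a0 : ℤ) : ZMod e) = i := hi_int e k hrem0 hidef.symm
    -- row a0 carries a minus
    have hentA0 : rowEntry e k lam i 0 a0 = some false := by
      rw [rowEntry_eq_false_iff]
      refine ⟨?_, hrem0, hidef.symm⟩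
      rintro ⟨-, hAr⟩
      have hAr' : ((k 0 + (lam 0 a0 : ℤ) - a0 : ℤ) : ZMod e) = i := hAr
      rw [← hii0] at hAr'
      refine zmod_intCast_ne e he ?_ ?_ ?_ hAr' <;> omega
    -- no entries below row a0
    have hentGT : ∀ j : ℕ, ent e k lam i (a0 + 1 + j) = none := by
      intro j
      have h0 : lam 0 (a0 + 1 + j) = 0 := ha0gt _ (by omega)
      have h1 : lam 0 (a0 + 1 + j + 1) = 0 := ha0gt _ (by omega)
      have hrn : rowEntry e k lam i 0 (a0 + 1 + j) = none := by
        rw [rowEntry_eq_none_iff]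
        constructor
        · rintro ⟨hA, hAr⟩
          match j with
          | 0 =>
            have hAr' : ((k 0 + (lam 0 (a0 + 1) : ℤ) - (a0 + 1 : ℕ) : ℤ) : ZMod e) = i := hAr
            rw [← hii0] at hAr'
            have h00 : lam 0 (a0 + 1) = 0 := ha0gt _ (by omega)
            have hlame : lam 0 a0 < e := by
              have h2 := hres a0
              omega
            have hpos0 : 1 ≤ lam 0 a0 := by omega
            refine zmod_intCast_ne e he ?_ ?_ ?_ hAr' <;> push_cast <;> omega
          | j' + 1 =>
            rcases hA with h | h
            · omega
            · have h2 : lam 0 (a0 + 1 + (j' + 1) - 1) = 0 := ha0gt _ (by omega)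
              omega
        · rintro ⟨hR, -⟩
          have hR' : lam 0 (a0 + 1 + j + 1) < lam 0 (a0 + 1 + j) := hR
          omega
      unfold ent
      rw [hrn]
      rfl
    -- the entry list ends with the minus of row a0
    have hsplitA0 : entryList e k lam i (N + 1)
        = (List.range a0).filterMap (ent e k lam i) ++ [(false, ((0 : Fin 1), a0))] := by
      rw [entryList_eq, range_split (show a0 ≤ N by omega), List.filterMap_append,
        List.filterMap_cons_some (ent_of_rowEntry e k hentA0), List.filterMap_map,
        show List.filterMap (ent e k lam i ∘ fun j => a0 + 1 + j) (List.range (N - a0)) = []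
          from List.filterMap_eq_nil_iff.mpr (fun c _ => hentGT c)]
    -- the final stack
    have hfinal_cons : List.foldl scanStep [] (entryList e k lam i (N + 1))
        = (false, ((0 : Fin 1), a0)) :: List.foldl scanStep []
            ((List.range a0).filterMap (ent e k lam i)) := by
      rw [hsplitA0, List.foldl_append]
      rfl
    obtain ⟨F, T, hFT, hFfalse, hTtrue⟩ :=
      foldl_scan_FT (entryList e k lam i (N + 1)) [] [] [] rfl (by simp) (by simp)
    have hFne : F ≠ [] := by
      intro hFnil
      have hmem : (false, ((0 : Fin 1), a0)) ∈ F ++ T := by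
        rw [← hFT, hfinal_cons]
        exact List.mem_cons_self
      rw [hFnil, List.nil_append] at hmem
      have := hTtrue _ hmem
      simp at this
    obtain ⟨x, hxdef⟩ : ∃ y, y = F.getLast hFne := ⟨_, rfl⟩
    have hxF : x ∈ F := by rw [hxdef]; exact List.getLast_mem hFne
    have hxfinal : x ∈ List.foldl scanStep [] (entryList e k lam i (N + 1)) := by
      rw [hFT]
      exact List.mem_append_left _ hxF
    have hxfalse : x.1 = false := hFfalse x hxF
    obtain ⟨hxrow, hxpair, hxlt⟩ := mem_entryList_rowEntry e k (mem_final_entryList e k hxfinal)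
    obtain ⟨a, hadef⟩ : ∃ c, c = x.2.2 := ⟨_, rfl⟩
    rw [← hadef] at hxrow hxpair hxlt
    have hxeq : x = (false, ((0 : Fin 1), a)) := Prod.ext hxfalse hxpair
    have hrowa : rowEntry e k lam i 0 a = some false := by
      rw [← hxfalse]
      exact hxrow
    obtain ⟨hnAa, hrema, hresa⟩ := (rowEntry_eq_false_iff e k).mp hrowa
    have hrema' : lam 0 (a + 1) < lam 0 a := hrema
    have hpa : 1 ≤ lam 0 a := by omega
    have haN2 : a < N := by
      by_contra hcb
      push_neg at hcb
      have := hN a hcb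
      omega
    have hiia : ((k 0 + (lam 0 a : ℤ) - 1 - a : ℤ) : ZMod e) = i := hi_int e k hrema' hresa
    -- split the entry list at row a
    have hsplita : entryList e k lam i (N + 1)
        = (List.range a).filterMap (ent e k lam i) ++ (false, ((0 : Fin 1), a))
          :: (List.range (N - a)).filterMap (fun j => ent e k lam i (a + 1 + j)) := by
      rw [entryList_eq, range_split (show a ≤ N by omega), List.filterMap_append,
        List.filterMap_cons_some (ent_of_rowEntry e k hrowa), List.filterMap_map]
      rfl
    have hfolda : List.foldl scanStep [] (entryList e k lam i (N + 1))
        = List.foldl scanStep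
            ((false, ((0 : Fin 1), a)) :: List.foldl scanStep []
              ((List.range a).filterMap (ent e k lam i)))
            ((List.range (N - a)).filterMap (fun j => ent e k lam i (a + 1 + j))) := by
      rw [hsplita, List.foldl_append]
      rfl
    have hnotQa : (false, ((0 : Fin 1), a))
        ∉ (List.range (N - a)).filterMap (fun j => ent e k lam i (a + 1 + j)) := by
      intro hc
      have h2 := mem_shift_filterMap_ent e k hc
      simp at h2
    have hnotS0 : (false, ((0 : Fin 1), a))
        ∉ List.foldl scanStep [] ((List.range a).filterMap (ent e k lam i)) := by
      intro hc
      rcases mem_foldl_scan _ _ _ hc with h' | h'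
      · simp at h'
      · have := mem_range_filterMap_ent e k h'
        simp at this
    obtain ⟨X, hXcont, hXeq1, hXeq2⟩ :=
      survive_false ((List.range (N - a)).filterMap (fun j => ent e k lam i (a + 1 + j)))
        [] (List.foldl scanStep [] ((List.range a).filterMap (ent e k lam i)))
        ((0 : Fin 1), a) hnotQa hnotS0 (by simp)
        (by rw [List.nil_append, ← hfolda, ← hxeq]; exact hxfinal)
        (true, ((0 : Fin 1), a))
    rw [List.nil_append] at hXeq1 hXeq2
    have hxnotX : (false, ((0 : Fin 1), a)) ∉ X := by
      intro hc
      rcases hXcont _ hc with h' | h'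
      · simp at h'
      · have h2 := mem_shift_filterMap_ent e k h'
        simp at h2
    -- nodup of the final stack
    have hnodup : (List.foldl scanStep [] (entryList e k lam i (N + 1))).Nodup := by
      refine List.Nodup.sublist ?_ (List.nodup_reverse.mpr (entryList_nodup e k lam i (N + 1)))
      have := foldl_scan_sublist (entryList e k lam i (N + 1)) []
      rwa [List.append_nil] at this
    -- the anchor decomposition
    have hFsplit : List.foldl scanStep [] (entryList e k lam i (N + 1))
        = F.dropLast ++ x :: T := by
      rw [hFT]
      conv_lhs => rw [← List.dropLast_append_getLast hFne]
      rw [← hxdef]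
      simp
    have hxnotdrop : x ∉ F.dropLast := by
      rw [hFsplit] at hnodup
      obtain ⟨-, -, hdisj⟩ := List.nodup_append.mp hnodup
      intro hc
      exact hdisj x hc x List.mem_cons_self rfl
    -- match the two decompositions
    have hcomb1 : F.dropLast ++ x :: T = X ++ x :: List.foldl scanStep []
        ((List.range a).filterMap (ent e k lam i)) := by
      rw [← hFsplit, hfolda, hXeq1, hxeq]
    have hxnotX' : x ∉ X := by
      rw [hxeq]
      exact hxnotX
    have hmatch := append_cons_inj hcomb1 hxnotdrop hxnotX'
    have hS0true : ∀ w ∈ List.foldl scanStep []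
        ((List.range a).filterMap (ent e k lam i)), w.1 = true := by
      rw [← hmatch.2]
      exact hTtrue
    have hXfalse : ∀ w ∈ X, w.1 = false := by
      rw [← hmatch.1]
      intro w hw
      exact hFfalse w ((List.dropLast_sublist F).subset hw)
    -- the smaller partition
    have hmuanti : Antitone (decAt lam a 0) := by
      apply antitone_nat_of_succ_le
      intro c
      have h1 := hanti (show c ≤ c + 1 by omega)
      by_cases hc : c = a
      · rw [hc, decAt_at, decAt_ne (a + 1) (by omega)]
        omega
      · by_cases hc1 : c + 1 = a
        · rw [decAt_ne c hc, hc1, decAt_at]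
          have := hanti (show c ≤ a by omega)
          omega
        · rw [decAt_ne c hc, decAt_ne (c + 1) hc1]
          exact h1
    have hmures : ∀ b, decAt lam a 0 b - decAt lam a 0 (b + 1) < e := by
      intro b
      have h1 := hres b
      by_cases hb : b = a
      · rw [hb, decAt_at, decAt_ne (a + 1) (by omega)]
        have h2 := hres a
        omega
      by_cases hb1 : b + 1 = a
      · rw [decAt_ne b hb, hb1, decAt_at]
        by_contra hcon
        push_neg at hcon
        -- λ_b = λ_a + e - 1, row b also carries a minus directly above row a
        have hlam_b : lam 0 b = lam 0 a + e - 1 := by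
          rw [hb1] at h1
          omega
        have hremb : RowRemovable lam 0 b := by
          show lam 0 (b + 1) < lam 0 b
          rw [hb1]
          omega
        have hresb : remRes e k lam 0 b = i := by
          show ((k 0 + ((lam 0 b - 1 : ℕ) : ℤ) - b : ℤ) : ZMod e) = i
          rw [show (k 0 + ((lam 0 b - 1 : ℕ) : ℤ) - b : ℤ)
              = (k 0 + (lam 0 a : ℤ) - 1 - a) + e from by omega]
          rw [intCast_add_e, hiia]
        have hnab : ¬(RowAddable lam 0 b ∧ addRes e k lam 0 b = i) := by
          rintro ⟨-, hAr⟩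
          have hAr' : ((k 0 + (lam 0 b : ℤ) - b : ℤ) : ZMod e) = i := hAr
          rw [show (k 0 + (lam 0 b : ℤ) - b : ℤ)
              = (k 0 + (lam 0 a : ℤ) - 1 - a + 1) + e from by omega] at hAr'
          rw [intCast_add_e] at hAr'
          rw [← hiia] at hAr'
          refine zmod_intCast_ne e he ?_ ?_ ?_ hAr' <;> omega
        have hentb : ent e k lam i b = some (false, ((0 : Fin 1), b)) :=
          ent_of_rowEntry e k ((rowEntry_eq_false_iff e k).mpr ⟨hnab, hremb, hresb⟩)
        -- split at rows b, a
        have hsplit2 : entryList e k lam i (N + 1)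
            = (List.range b).filterMap (ent e k lam i) ++ (false, ((0 : Fin 1), b))
              :: (false, ((0 : Fin 1), a))
              :: (List.range (N - b - 1)).filterMap (fun j => ent e k lam i (b + 2 + j)) := by
          rw [entryList_eq, range_split2 (show b + 1 ≤ N by omega), List.filterMap_append,
            List.filterMap_cons_some (by rw [hentb]),
            List.filterMap_cons_some (show ent e k lam i (b + 1)
              = some (false, ((0 : Fin 1), a)) from by
                rw [hb1]; exact ent_of_rowEntry e k hrowa),
            List.filterMap_map]
          rfl
        have hfold2 : List.foldl scanStep [] (entryList e k lam i (N + 1))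
            = List.foldl scanStep
                ((false, ((0 : Fin 1), a)) :: (false, ((0 : Fin 1), b))
                  :: List.foldl scanStep [] ((List.range b).filterMap (ent e k lam i)))
                ((List.range (N - b - 1)).filterMap (fun j => ent e k lam i (b + 2 + j))) := by
          rw [hsplit2, List.foldl_append]
          rfl
        have hnotQ2 : (false, ((0 : Fin 1), a))
            ∉ (List.range (N - b - 1)).filterMap (fun j => ent e k lam i (b + 2 + j)) := by
          intro hc
          have h2 := mem_shift_filterMap_ent e k hc
          simp at h2
          omega
        have hnotst2 : (false, ((0 : Fin 1), a)) ∉ (false, ((0 : Fin 1), b))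
            :: List.foldl scanStep [] ((List.range b).filterMap (ent e k lam i)) := by
          intro hc
          rcases List.mem_cons.mp hc with h' | h'
          · have hab : a = b := congrArg (fun w => w.2.2) h'
            omega
          · rcases mem_foldl_scan _ _ _ h' with h'' | h''
            · simp at h''
            · have h2 := mem_range_filterMap_ent e k h''
              simp at h2
              omega
        obtain ⟨X2, hX2cont, hX2eq, -⟩ :=
          survive_false _ [] _ ((0 : Fin 1), a) hnotQ2 hnotst2 (by simp)
            (by rw [List.nil_append, ← hfold2, ← hxeq]; exact hxfinal)
            (false, ((0 : Fin 1), a))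
        rw [List.nil_append] at hX2eq
        have hxnotX2 : x ∉ X2 := by
          intro hc
          rcases hX2cont x hc with h' | h'
          · simp at h'
          · have h2 := mem_shift_filterMap_ent e k h'
            rw [← hadef] at h2
            omega
        have hcomb2 : F.dropLast ++ x :: T = X2 ++ x :: ((false, ((0 : Fin 1), b))
            :: List.foldl scanStep [] ((List.range b).filterMap (ent e k lam i))) := by
          rw [← hFsplit, hfold2, hX2eq, hxeq]
        have hmatch2 := append_cons_inj hcomb2 hxnotdrop hxnotX2
        have hTmem : (false, ((0 : Fin 1), b)) ∈ T := by
          rw [hmatch2.2]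
          exact List.mem_cons_self
        have := hTtrue _ hTmem
        simp at this
      · rw [decAt_ne b hb, decAt_ne (b + 1) hb1]
        exact h1
    -- μ's entry list
    have hentmu_a : ent e k (decAt lam a) i a = some (true, ((0 : Fin 1), a)) :=
      ent_of_rowEntry e k (decAt_rowEntry_at e k hanti hrema' hresa)
    have hentmu_ne : ∀ c, c ≠ a → ent e k (decAt lam a) i c = ent e k lam i c := by
      intro c hc
      unfold ent
      rw [decAt_rowEntry_ne e k he hanti hrema' hresa c hc]
    have hsplitmu : entryList e k (decAt lam a) i (N + 1)
        = (List.range a).filterMap (ent e k lam i) ++ (true, ((0 : Fin 1), a))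
          :: (List.range (N - a)).filterMap (fun j => ent e k lam i (a + 1 + j)) := by
      rw [entryList_eq, range_split (show a ≤ N by omega), List.filterMap_append,
        List.filterMap_cons_some hentmu_a, List.filterMap_map]
      congr 1
      · exact List.filterMap_congr (fun c hc =>
          hentmu_ne c (by have := List.mem_range.mp hc; omega))
      · congr 1
        exact List.filterMap_congr (fun j _ => hentmu_ne (a + 1 + j) (by omega))
    have hpushmu : scanStep (List.foldl scanStep [] ((List.range a).filterMap (ent e k lam i)))
        (true, ((0 : Fin 1), a))
        = (true, ((0 : Fin 1), a)) :: List.foldl scanStep []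
            ((List.range a).filterMap (ent e k lam i)) := by
      cases hS : List.foldl scanStep [] ((List.range a).filterMap (ent e k lam i)) with
      | nil => rw [scanStep_nil]
      | cons w rest =>
        obtain ⟨wb, wq⟩ := w
        have hw : wb = true := hS0true (wb, wq) (by rw [hS]; exact List.mem_cons_self)
        subst hw
        rw [scanStep_push_true]
    have hmufold : List.foldl scanStep [] (entryList e k (decAt lam a) i (N + 1))
        = X ++ (true, ((0 : Fin 1), a)) :: List.foldl scanStep []
            ((List.range a).filterMap (ent e k lam i)) := by
      rw [hsplitmu, List.foldl_append]
      show List.foldl scanStep (scanStep _ _) _ = _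
      rw [hpushmu]
      exact hXeq2
    -- goodRow of μ picks row a
    have hgood : goodRow e k (decAt lam a) i (N + 1) = some ((0 : Fin 1), a) := by
      unfold goodRow
      rw [hmufold, List.find?_append, List.find?_eq_none.mpr (fun w hw => by
          rw [hXfalse w hw]; simp), Option.none_or, List.find?_cons_of_pos rfl]
      rfl
    have hmuN : ∀ c, N ≤ c → decAt lam a 0 c = 0 := by
      intro c hc
      have hca : c ≠ a := by omega
      rw [decAt_ne c hca]
      exact hN c hc
    have hfstep : FStep e 1 k (decAt lam a) lam := by
      refine ⟨i, N, ?_, ((0 : Fin 1), a), hgood, ?_⟩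
      · intro m c hc
        have hm : m = 0 := Subsingleton.elim _ _
        subst hm
        exact hmuN c hc
      · funext m c
        have hm : m = 0 := Subsingleton.elim _ _
        subst hm
        unfold addAt
        by_cases hca : c = a
        · subst hca
          rw [if_pos ⟨rfl, rfl⟩, decAt_at]
          omega
        · rw [if_neg (by simp [hca]), decAt_ne c hca]
    have hsum_eq : (Finset.range N).sum (lam 0) = (Finset.range N).sum (decAt lam a 0) + 1 := by
      have h1 : ∀ c ∈ Finset.range N, lam 0 c = decAt lam a 0 c + (if c = a then 1 else 0) := by
        intro c hc
        by_cases hca : c = a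
        · subst hca
          rw [decAt_at, if_pos rfl]
          omega
        · rw [decAt_ne c hca, if_neg hca]
          omega
      rw [Finset.sum_congr rfl h1, Finset.sum_add_distrib,
        Finset.sum_ite_eq' (Finset.range N) a (fun _ => 1), if_pos (Finset.mem_range.mpr haN2)]
    exact Relation.ReflTransGen.tail
      (ih (decAt lam a) hmuanti hmures N hmuN (by omega)) hfstep

end BackwardMain

/-- suppose `e ≥ 2` and `l = 1`.  A partition `λ` belongs to the set
`RP^Λ` of restricted partitions (the connected component of the Fock space crystal
generated by the empty partition) if and only if `λ_a − λ_{a+1} < e` for all rows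
`a`. -/
theorem restricted_iff_eRestricted
    (e : ℕ) (he : 2 ≤ e) (k : Fin 1 → ℤ) (lam : MP 1) (hlam : IsMP lam) :
    Restricted e 1 k lam ↔ ∀ a : ℕ, lam 0 a - lam 0 (a + 1) < e := by
  constructor
  · intro h
    unfold Restricted at h
    clear hlam
    induction h with
    | refl =>
      intro a
      show (0 : ℕ) - 0 < e
      omega
    | tail h1 h2 ih =>
      exact fstep_preserves e k he ih h2
  · intro h
    obtain ⟨hanti, N, hN⟩ := hlam
    exact restricted_of_eRestricted e k he ((Finset.range N).sum (lam 0)) lam (hanti 0) h N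
      (fun b hb => hN 0 b hb) le_rfl
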